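/- Let b : [0,∞) → (0,∞) be C¹ with b increasing, and suppose there exist q > 1 and constants c₁, c₂ > 0 such that c₁(s² + |s|^q) ≤ b(s²)s² ≤ c₂(s² + |s|^q) for all s ∈ ℝ. Then there exists a constant C > 0 such that for all x, y ∈ ℝ^N one has ⟨b(|x|²)x − b(|y|²)y, x − y⟩ ≥ C(|x − y|² + |x − y|^q). -/

import Mathlib

open MeasureTheory RealInnerProductSpace

/-- For `0 ≤ d ≤ r` and `2 ≤ q`, `d^q * r^2 ≤ r^q * d^2`. -/
lemma aux_pow_trick {d r q : ℝ} (hd : 0 ≤ d) (hdr : d ≤ r) (hq : 2 ≤ q) :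
    d ^ q * r ^ 2 ≤ r ^ q * d ^ 2 := by
  rcases eq_or_lt_of_le hd with h | h
  · rw [← h, Real.zero_rpow (by linarith : q ≠ 0)]
    have : (0:ℝ) ≤ r ^ q := Real.rpow_nonneg (by linarith) q
    nlinarith
  · have hr : 0 < r := lt_of_lt_of_le h hdr
    have e1 : d ^ q = d ^ 2 * d ^ (q - 2) := by
      rw [← Real.rpow_two, ← Real.rpow_add h]; ring_nf
    have e2 : r ^ q = r ^ 2 * r ^ (q - 2) := by
      rw [← Real.rpow_two, ← Real.rpow_add hr]; ring_nf
    have e3 : d ^ (q - 2) ≤ r ^ (q - 2) := Real.rpow_le_rpow hd hdr (by linarith)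
    have h1 : (0:ℝ) ≤ d ^ 2 * r ^ 2 := by positivity
    calc d ^ q * r ^ 2 = (d ^ 2 * r ^ 2) * d ^ (q-2) := by rw [e1]; ring
      _ ≤ (d ^ 2 * r ^ 2) * r ^ (q-2) := mul_le_mul_of_nonneg_left e3 h1
      _ = r ^ q * d ^ 2 := by rw [e2]; ring

set_option maxHeartbeats 800000 in
/-- The purely scalar core of the monotonicity estimate. -/
lemma aux_scalar {q c₁ K a c r t d p : ℝ} (hq2 : 2 ≤ q) (hc₁ : 0 < c₁)
    (hK : K = (2:ℝ) ^ q) (hr : 0 < r) (ht0 : 0 ≤ t) (htr : t ≤ r) (hd0 : 0 ≤ d)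
    (hdrt : d ≤ r + t) (hp : p ≤ r * t) (hd2 : d ^ 2 = r ^ 2 + t ^ 2 - 2 * p)
    (hcpos : 0 < c) (hca : c ≤ a) (hgr : c₁ * (r ^ 2 + r ^ q) ≤ a * r ^ 2) :
    c₁ / (2 * K) * (d ^ 2 + d ^ q) ≤ a * r ^ 2 + c * t ^ 2 - (a + c) * p := by
  have hKpos : 0 < K := hK ▸ Real.rpow_pos_of_pos (by norm_num) q
  have hK4 : 4 ≤ K := by
    have h := Real.rpow_le_rpow_of_exponent_le (by norm_num : (1:ℝ) ≤ 2) hq2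
    rw [Real.rpow_two] at h; rw [hK]; nlinarith
  have hdq0 : 0 ≤ d ^ q := Real.rpow_nonneg hd0 q
  have hrq0 : 0 ≤ r ^ q := Real.rpow_nonneg hr.le q
  rcases le_or_gt d r with hcase | hcase
  · -- Case A : d ≤ r
    have hI : a / 2 * d ^ 2 ≤ a * r ^ 2 + c * t ^ 2 - (a + c) * p := by
      nlinarith [mul_nonneg (sub_nonneg.mpr hca) (sub_nonneg.mpr hp),
        mul_nonneg (sub_nonneg.mpr hca) (by nlinarith : (0:ℝ) ≤ r^2 - t^2),
        mul_nonneg hcpos.le (sq_nonneg d)]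
    have htrick : d ^ q * r ^ 2 ≤ r ^ q * d ^ 2 := aux_pow_trick hd0 hcase hq2
    have h1 : c₁ * (d ^ 2 + d ^ q) * r ^ 2 ≤ a * d ^ 2 * r ^ 2 := by
      nlinarith [mul_le_mul_of_nonneg_right hgr (sq_nonneg d), mul_le_mul_of_nonneg_left htrick hc₁.le]
    have h2 : c₁ * (d ^ 2 + d ^ q) ≤ a * d ^ 2 :=
      le_of_mul_le_mul_right (by nlinarith) (by positivity : (0:ℝ) < r ^ 2)
    rw [div_mul_eq_mul_div, div_le_iff₀ (by positivity)]
    nlinarith [mul_le_mul_of_nonneg_left hI (by linarith : (0:ℝ) ≤ 2 * K - 2),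
      mul_nonneg (mul_nonneg hc₁.le (by linarith : (0:ℝ) ≤ K - 2))
        (by positivity : (0:ℝ) ≤ d ^ 2 + d ^ q)]
  · -- Case B : r < d
    have hp2 : 2 * p < t ^ 2 := by nlinarith
    have ht2r : t ^ 2 ≤ r ^ 2 := by nlinarith
    have hI : a / 2 * r ^ 2 ≤ a * r ^ 2 + c * t ^ 2 - (a + c) * p := by
      nlinarith [mul_nonneg hcpos.le (by linarith : (0:ℝ) ≤ t ^ 2 - 2 * p),
        mul_nonneg (by linarith : (0:ℝ) ≤ a) (by linarith : (0:ℝ) ≤ r ^ 2 - 2 * p)]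
    have hd2r : d ≤ 2 * r := by linarith
    have hdq : d ^ q ≤ K * r ^ q := by
      have h1 : d ^ q ≤ (2 * r) ^ q := Real.rpow_le_rpow hd0 hd2r (by linarith)
      have h2 : (2 * r) ^ q = K * r ^ q := by rw [hK, Real.mul_rpow (by norm_num) hr.le]
      linarith
    have hd4 : d ^ 2 ≤ 4 * r ^ 2 := by nlinarith
    rw [div_mul_eq_mul_div, div_le_iff₀ (by positivity)]
    have h3 : c₁ * (d ^ 2 + d ^ q) ≤ c₁ * K * (r ^ 2 + r ^ q) := by
      nlinarith [mul_nonneg hc₁.le hrq0,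
        mul_nonneg hc₁.le (mul_nonneg (by linarith : (0:ℝ) ≤ K - 4) (sq_nonneg r))]
    nlinarith [mul_le_mul_of_nonneg_left hgr hKpos.le,
      mul_le_mul_of_nonneg_left hI (by linarith : (0:ℝ) ≤ 2 * K)]

/-- If b : [0,∞) → (0,∞) is C¹ (continuous at 0), increasing, and satisfies
c₁(s² + |s|^q) ≤ b(s²)s² ≤ c₂(s² + |s|^q) for some q > 1 and c₁, c₂ > 0, then there is
C > 0 with ⟨b(|x|²)x − b(|y|²)y, x − y⟩ ≥ C(|x−y|² + |x−y|^q) for all x, y ∈ ℝ^N. -/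
theorem stmt_0 (N : ℕ) (hN : 1 ≤ N) (b : ℝ → ℝ)
    (hbpos : ∀ s : ℝ, 0 ≤ s → 0 < b s)
    (hbC1 : ContDiffOn ℝ 1 b (Set.Ioi 0)) (hbcont : ContinuousOn b (Set.Ici 0))
    (hbmono : MonotoneOn b (Set.Ici 0))
    (q c₁ c₂ : ℝ) (hq : 1 < q) (hc₁ : 0 < c₁) (hc₂ : 0 < c₂)
    (hgrowth : ∀ s : ℝ, c₁ * (s ^ 2 + |s| ^ q) ≤ b (s ^ 2) * s ^ 2 ∧
      b (s ^ 2) * s ^ 2 ≤ c₂ * (s ^ 2 + |s| ^ q)) :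
    ∃ C : ℝ, 0 < C ∧ ∀ x y : EuclideanSpace ℝ (Fin N),
      C * (‖x - y‖ ^ 2 + ‖x - y‖ ^ q) ≤
        inner ℝ (b (‖x‖ ^ 2) • x - b (‖y‖ ^ 2) • y) (x - y) := by
  have hq0 : q ≠ 0 := by linarith
  -- Step 0: the hypotheses force 2 ≤ q.
  have hq2 : 2 ≤ q := by
    by_contra hlt
    push_neg at hlt
    have hBpos : 0 < b 1 := hbpos 1 (by norm_num)
    set B : ℝ := b 1 with hB
    have hA0 : 0 < c₁ / (c₁ + B) := div_pos hc₁ (by linarith)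
    have hA1 : c₁ / (c₁ + B) < 1 := by
      rw [div_lt_one (by linarith)]; linarith
    set A : ℝ := c₁ / (c₁ + B) with hA
    set t : ℝ := A ^ (1 / (2 - q)) with ht
    have htpos : 0 < t := Real.rpow_pos_of_pos hA0 _
    have ht1 : t < 1 := Real.rpow_lt_one hA0.le hA1 (div_pos one_pos (by linarith))
    have hg := (hgrowth t).1
    rw [abs_of_nonneg htpos.le] at hg
    have hbt : b (t ^ 2) ≤ B := by
      have h1 : t ^ 2 ≤ 1 := by nlinarith
      exact hbmono (Set.mem_Ici.mpr (by positivity)) (Set.mem_Ici.mpr (by norm_num)) h1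
    have htq : 0 < t ^ q := Real.rpow_pos_of_pos htpos q
    have hkey : c₁ * t ^ q ≤ B * t ^ 2 := by nlinarith
    have hAq : t ^ (2 - q) = A := by
      rw [ht, ← Real.rpow_mul hA0.le, one_div_mul_cancel (by linarith : (2:ℝ) - q ≠ 0),
        Real.rpow_one]
    have ht2 : t ^ 2 = t ^ q * A := by
      rw [← hAq, ← Real.rpow_two, ← Real.rpow_add htpos]; ring_nf
    rw [ht2] at hkey
    have h5 : c₁ ≤ B * A :=
      (mul_le_mul_iff_of_pos_right htq).mp (by linarith [hkey] : c₁ * t ^ q ≤ (B * A) * t ^ q)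
    have h6 : B * A < c₁ := by
      rw [hA, mul_div_assoc', div_lt_iff₀ (by linarith)]
      nlinarith
    linarith
  set K : ℝ := (2:ℝ) ^ q with hK
  have hKpos : 0 < K := Real.rpow_pos_of_pos (by norm_num) q
  refine ⟨c₁ / (2 * K), by positivity, ?_⟩
  have key : ∀ x y : EuclideanSpace ℝ (Fin N), ‖y‖ ≤ ‖x‖ →
      c₁ / (2 * K) * (‖x - y‖ ^ 2 + ‖x - y‖ ^ q) ≤
        inner ℝ (b (‖x‖ ^ 2) • x - b (‖y‖ ^ 2) • y) (x - y) := by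
    intro x y htr
    rcases eq_or_lt_of_le (norm_nonneg x) with hr | hr
    · -- ‖x‖ = 0 : x = y = 0
      have hx0 : x = 0 := norm_eq_zero.mp hr.symm
      have hy0 : y = 0 := norm_eq_zero.mp (le_antisymm (hr ▸ htr) (norm_nonneg y))
      rw [hx0, hy0]
      simp [Real.zero_rpow hq0]
    · have hid : (inner ℝ (b (‖x‖ ^ 2) • x - b (‖y‖ ^ 2) • y) (x - y) : ℝ) =
          b (‖x‖ ^ 2) * ‖x‖ ^ 2 + b (‖y‖ ^ 2) * ‖y‖ ^ 2
            - (b (‖x‖ ^ 2) + b (‖y‖ ^ 2)) * (inner ℝ x y : ℝ) := by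
        simp only [inner_sub_left, inner_sub_right, real_inner_smul_left]
        rw [real_inner_self_eq_norm_sq, real_inner_self_eq_norm_sq, real_inner_comm y x]
        ring
      rw [hid]
      have hgr := (hgrowth ‖x‖).1
      rw [abs_of_nonneg (norm_nonneg x)] at hgr
      have hd2 : ‖x - y‖ ^ 2 = ‖x‖ ^ 2 + ‖y‖ ^ 2 - 2 * (inner ℝ x y : ℝ) := by
        rw [norm_sub_sq_real]; ring
      exact aux_scalar hq2 hc₁ hK hr (norm_nonneg y) htr (norm_nonneg _)
        (norm_sub_le x y) (real_inner_le_norm x y) hd2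
        (hbpos _ (by positivity))
        (hbmono (Set.mem_Ici.mpr (by positivity)) (Set.mem_Ici.mpr (by positivity))
          (by nlinarith [norm_nonneg y]))
        hgr
  intro x y
  rcases le_total ‖y‖ ‖x‖ with h | h
  · exact key x y h
  · have hk := key y x h
    have e : (inner ℝ (b (‖y‖ ^ 2) • y - b (‖x‖ ^ 2) • x) (y - x) : ℝ) =
        inner ℝ (b (‖x‖ ^ 2) • x - b (‖y‖ ^ 2) • y) (x - y) := by
      rw [← neg_sub (b (‖x‖ ^ 2) • x), ← neg_sub x y, inner_neg_neg]
    rw [norm_sub_rev y x, e] at hk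
    exact hk
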